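/- Let D^t ⊆ ℝ^n be open and D^z ⊆ ℝ^s be open and symmetric under componentwise sign changes. Let f : D^t → ℝ and cE : D^t × D^z → ℝ^{m₁}, cI : D^t × D^z → ℝ^{m₂}, cZ : D^t × D^z → ℝ^s be twice continuously differentiable, with ∂₂cZ(t,r) strictly lower triangular for all (t,r) ∈ D^t × D^z. Let (t*, z*) ∈ D^t × D^z be feasible (cE(t*,|z*|) = 0, cI(t*,|z*|) ≥ 0, cZ(t*,|z*|) = z*) and a local minimizer of (t,z) ↦ f(t) over F = {(t,z) ∈ D^t × D^z : cE(t,|z|) = 0, cI(t,|z|) ≥ 0, cZ(t,|z|) = z}. Let σ = sign(z*), Σ = diag(σ), α = {i : z*ᵢ = 0}, α^c its complement, A = {i : cIᵢ(t*,|z*|) = 0}, W = (I − ∂₂cZ*Σ)⁻¹∂₁cZ*, and assume LIKQ: the matrix J = [[∂₁cE* + ∂₂cE*ΣW], [P_A(∂₁cI* + ∂₂cI*ΣW)], [P_α W]] has full row rank, where a star denotes evaluation at (t*,|z*|). Let (λ_E, λ_I, λ_Z) be multipliers satisfying the kink stationarity conditions at (t*, z*). Then for every d ∈ ℝ^n with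 Jd = 0, setting d_s = P_{α^c}ᵀP_{α^c}ΣW d ∈ ℝ^s, one has (d, d_s)ᵀ H (d, d_s) ≥ 0, where H ∈ ℝ^{(n+s)×(n+s)} is the Hessian with respect to (t, r) ∈ ℝ^n × ℝ^s of the function (t,r) ↦ f(t) + λ_Eᵀ cE(t,r) − λ_Iᵀ cI(t,r) + λ_Zᵀ cZ(t,r), evaluated at (t*, |z*|). -/

import Mathlib

open Matrix
open scoped Classical

noncomputable section

/-- Selection matrix `P_S` whose rows are the unit row vectors `eᵢᵀ`, `i ∈ S`. -/
def sel {k : ℕ} (p : Fin k → Prop) : Matrix {i // p i} (Fin k) ℝ :=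
  Matrix.of fun i j => if (i : Fin k) = j then 1 else 0

/-- componentwise absolute value -/
def vabs {s : ℕ} (z : Fin s → ℝ) : Fin s → ℝ := fun i => |z i|

/-- Partial Jacobian with respect to the first argument. -/
def jac1 {n s m : ℕ} (c : (Fin n → ℝ) × (Fin s → ℝ) → Fin m → ℝ)
    (p : (Fin n → ℝ) × (Fin s → ℝ)) : Matrix (Fin m) (Fin n) ℝ :=
  Matrix.of fun i j => fderiv ℝ c p (Pi.single j 1, 0) i

/-- Partial Jacobian with respect to the second argument. -/
def jac2 {n s m : ℕ} (c : (Fin n → ℝ) × (Fin s → ℝ) → Fin m → ℝ)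
    (p : (Fin n → ℝ) × (Fin s → ℝ)) : Matrix (Fin m) (Fin s) ℝ :=
  Matrix.of fun i j => fderiv ℝ c p (0, Pi.single j 1) i

/-- `W = (I − ∂₂cZ Σ)⁻¹ ∂₁cZ`. -/
def Wmat {n s : ℕ} (cZ : (Fin n → ℝ) × (Fin s → ℝ) → Fin s → ℝ)
    (p : (Fin n → ℝ) × (Fin s → ℝ)) (σ : Fin s → ℝ) : Matrix (Fin s) (Fin n) ℝ :=
  (1 - jac2 cZ p * Matrix.diagonal σ)⁻¹ * jac1 cZ p

/-- The LIKQ Jacobian `[[∂₁cE + ∂₂cE Σ W], [P_A(∂₁cI + ∂₂cI Σ W)], [P_α W]]`. -/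
def likqJ {n s m₁ m₂ : ℕ}
    (cE : (Fin n → ℝ) × (Fin s → ℝ) → Fin m₁ → ℝ)
    (cI : (Fin n → ℝ) × (Fin s → ℝ) → Fin m₂ → ℝ)
    (cZ : (Fin n → ℝ) × (Fin s → ℝ) → Fin s → ℝ)
    (p : (Fin n → ℝ) × (Fin s → ℝ)) (σ : Fin s → ℝ)
    (Apred : Fin m₂ → Prop) (αpred : Fin s → Prop) :
    Matrix (Fin m₁ ⊕ ({j // Apred j} ⊕ {i // αpred i})) (Fin n) ℝ :=
  Matrix.fromRows
    (jac1 cE p + jac2 cE p * Matrix.diagonal σ * Wmat cZ p σ)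
    (Matrix.fromRows
      (sel Apred * (jac1 cI p + jac2 cI p * Matrix.diagonal σ * Wmat cZ p σ))
      (sel αpred * Wmat cZ p σ))

/-- The Lagrangian `(t,r) ↦ f(t) + λ_Eᵀ cE(t,r) − λ_Iᵀ cI(t,r) + λ_Zᵀ cZ(t,r)`. -/
def Lagr {n s m₁ m₂ : ℕ} (f : (Fin n → ℝ) → ℝ)
    (cE : (Fin n → ℝ) × (Fin s → ℝ) → Fin m₁ → ℝ)
    (cI : (Fin n → ℝ) × (Fin s → ℝ) → Fin m₂ → ℝ)
    (cZ : (Fin n → ℝ) × (Fin s → ℝ) → Fin s → ℝ)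
    (lE : Fin m₁ → ℝ) (lI : Fin m₂ → ℝ) (lZ : Fin s → ℝ) :
    (Fin n → ℝ) × (Fin s → ℝ) → ℝ := fun p =>
  f p.1 + lE ⬝ᵥ cE p - lI ⬝ᵥ cI p + lZ ⬝ᵥ cZ p


open Filter
open scoped Topology

section Helpers

theorem clm_pi_apply {k : ℕ} {E : Type*} [NormedAddCommGroup E] [NormedSpace ℝ E]
    (D : (Fin k → ℝ) →L[ℝ] E) (w : Fin k → ℝ) :
    D w = ∑ j, w j • D (Pi.single j 1) := by
  have hw : w = ∑ j, w j • (Pi.single j 1 : Fin k → ℝ) := by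
    ext i
    simp [Pi.single_apply, Finset.sum_ite_eq']
  conv_lhs => rw [hw]
  rw [map_sum]
  simp

/-- Second derivative test: at a local minimum the second derivative is nonnegative. -/
theorem second_deriv_test {h : ℝ → ℝ} {h' : ℝ → ℝ} {m : ℝ}
    (hmin : IsLocalMin h 0)
    (hd : ∀ᶠ τ in 𝓝 (0:ℝ), HasDerivAt h (h' τ) τ)
    (hd2 : HasDerivAt h' m 0) : 0 ≤ m := by
  by_contra hm
  push_neg at hm
  have h'0 : h' 0 = 0 := by
    have := hmin.deriv_eq_zero
    rwa [hd.self_of_nhds.deriv] at this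
  have hslope : Tendsto (fun τ => h' τ / τ) (𝓝[>] (0:ℝ)) (𝓝 m) := by
    have h1 := hasDerivAt_iff_tendsto_slope.1 hd2
    have h2 : Tendsto (slope h' 0) (𝓝[>] (0:ℝ)) (𝓝 m) :=
      h1.mono_left (nhdsWithin_mono _ (fun x (hx : 0 < x) => ne_of_gt hx))
    refine h2.congr' ?_
    filter_upwards [self_mem_nhdsWithin] with τ (hτ : 0 < τ)
    rw [slope_def_field, h'0]
    simp only [sub_zero]
  have hneg : ∀ᶠ τ in 𝓝[>] (0:ℝ), h' τ < 0 := by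
    have h3 : ∀ᶠ τ in 𝓝[>] (0:ℝ), h' τ / τ < m / 2 :=
      hslope.eventually (eventually_lt_nhds (show m < m/2 by linarith))
    filter_upwards [h3, self_mem_nhdsWithin] with τ h1 (hτ : 0 < τ)
    nlinarith [(div_lt_iff₀ hτ).1 h1]
  have hneg' : ∀ᶠ τ in 𝓝 (0:ℝ), (0 < τ → h' τ < 0) ∧ HasDerivAt h (h' τ) τ :=
    (eventually_nhdsWithin_iff.1 hneg).and hd
  obtain ⟨ε, hε, hball⟩ := Metric.eventually_nhds_iff.1 hneg'
  set b := ε / 2 with hbdef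
  have hb : 0 < b := by positivity
  have hsub : ∀ τ ∈ Set.Icc (0:ℝ) b, (0 < τ → h' τ < 0) ∧ HasDerivAt h (h' τ) τ := by
    intro τ hτ
    apply hball
    rw [Real.dist_eq, sub_zero, abs_of_nonneg hτ.1]
    have := hτ.2; simp only [hbdef] at this ⊢; linarith
  have hanti : StrictAntiOn h (Set.Icc 0 b) := by
    apply strictAntiOn_of_deriv_neg (convex_Icc 0 b)
    · intro τ hτ
      exact ((hsub τ hτ).2).continuousAt.continuousWithinAt
    · intro τ hτ
      rw [interior_Icc] at hτ
      have h4 := hsub τ ⟨le_of_lt hτ.1, le_of_lt hτ.2⟩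
      rw [h4.2.deriv]
      exact h4.1 hτ.1
  have hFalse : ∀ᶠ τ in 𝓝[>] (0:ℝ), False := by
    have hm2 : ∀ᶠ τ in 𝓝[>] (0:ℝ), h 0 ≤ h τ :=
      (hmin.filter_mono nhdsWithin_le_nhds)
    have hm3 : ∀ᶠ τ in 𝓝[>] (0:ℝ), τ < b :=
      eventually_nhdsWithin_of_eventually_nhds (eventually_lt_nhds hb)
    filter_upwards [hm2, hm3, self_mem_nhdsWithin] with τ h5 h6 (hτ : 0 < τ)
    have := hanti (Set.left_mem_Icc.2 (le_of_lt hb)) ⟨le_of_lt hτ, le_of_lt h6⟩ hτ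
    linarith
  exact (hFalse.exists).elim (fun _ f => f)

/-- Existence of a C² curve inside a level set of a submersion, tangent to a kernel vector. -/
theorem curve_exists {X Y : Type*}
    [NormedAddCommGroup X] [NormedSpace ℝ X] [FiniteDimensional ℝ X]
    [NormedAddCommGroup Y] [NormedSpace ℝ Y] [FiniteDimensional ℝ Y]
    (G : X → Y) (p : X) (M : X →L[ℝ] Y)
    (hG : ContDiffAt ℝ 2 G p) (hM : HasFDerivAt G M p)
    (hsurj : Function.Surjective M) (v : X) (hv : M v = 0) :
    ∃ γ : ℝ → X, γ 0 = p ∧ ContDiffAt ℝ 2 γ 0 ∧ HasDerivAt γ v 0 ∧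
      (∀ᶠ τ in 𝓝 (0:ℝ), G (γ τ) = G p) := by
  classical
  obtain ⟨q, hq⟩ := Submodule.exists_isCompl (LinearMap.ker (M : X →ₗ[ℝ] Y))
  set K := LinearMap.ker (M : X →ₗ[ℝ] Y) with hK
  let πl : X →ₗ[ℝ] K := K.linearProjOfIsCompl q hq
  let π : X →L[ℝ] K := LinearMap.toContinuousLinearMap πl
  let Φ : X → Y × K := fun x => (G x, π x)
  let Ml : X →ₗ[ℝ] Y × K := LinearMap.prod (M : X →ₗ[ℝ] Y) πl
  have hMl_inj : Function.Injective Ml := by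
    rw [← LinearMap.ker_eq_bot, LinearMap.ker_eq_bot']
    intro x hx
    have h1 : M x = 0 := congrArg Prod.fst hx
    have h2 : πl x = 0 := congrArg Prod.snd hx
    have hxK : x ∈ K := h1
    have h3 : πl x = ⟨x, hxK⟩ := Submodule.linearProjOfIsCompl_apply_left hq ⟨x, hxK⟩
    rw [h3] at h2
    simpa using congrArg Subtype.val h2
  have hdim : Module.finrank ℝ X = Module.finrank ℝ (Y × K) := by
    have h1 := LinearMap.finrank_range_add_finrank_ker (M : X →ₗ[ℝ] Y)
    have h2 : LinearMap.range (M : X →ₗ[ℝ] Y) = ⊤ := LinearMap.range_eq_top.2 hsurj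
    rw [h2] at h1
    simp only [finrank_top] at h1
    rw [Module.finrank_prod, ← hK] at *
    omega
  have hMl_bij : Function.Bijective Ml :=
    ⟨hMl_inj, (LinearMap.injective_iff_surjective_of_finrank_eq_finrank hdim).1 hMl_inj⟩
  let e : X ≃L[ℝ] Y × K := (LinearEquiv.ofBijective Ml hMl_bij).toContinuousLinearEquiv
  have he_coe : ∀ x, e x = (M x, π x) := fun x => rfl
  have hΦ : ContDiffAt ℝ 2 Φ p := hG.prodMk (π.contDiff.contDiffAt)
  have hΦ' : HasFDerivAt Φ (e : X →L[ℝ] Y × K) p := by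
    have h5 : HasFDerivAt Φ (M.prod π) p := hM.prodMk π.hasFDerivAt
    convert h5 using 2
    exact ContinuousLinearMap.ext fun x => rfl
  have hn : (2:WithTop ℕ∞) ≠ 0 := by norm_num
  let g := hΦ.localInverse hΦ' hn
  have hg_smooth : ContDiffAt ℝ 2 g (Φ p) := hΦ.to_localInverse hΦ' hn
  have hg_strict : HasStrictFDerivAt g (e.symm : Y × K →L[ℝ] X) (Φ p) :=
    (hΦ.hasStrictFDerivAt' hΦ' hn).to_localInverse
  have hg_left : ∀ᶠ y in 𝓝 (Φ p), Φ (g y) = y :=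
    (hΦ.hasStrictFDerivAt' hΦ' hn).eventually_right_inverse
  have hg0 : g (Φ p) = p := hΦ.localInverse_apply_image hΦ' hn
  let ℓ : ℝ → Y × K := fun τ => Φ p + τ • ((0 : Y), π v)
  have hℓ0 : ℓ 0 = Φ p := by simp [ℓ]
  have hℓsmooth : ContDiff ℝ 2 ℓ :=
    ContDiff.add contDiff_const (contDiff_id.smul contDiff_const)
  have hℓd : HasDerivAt ℓ ((0 : Y), π v) 0 := by
    have h6 : HasDerivAt (fun τ : ℝ => τ • ((0 : Y), π v)) ((0 : Y), π v) 0 := by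
      simpa using (hasDerivAt_id (0:ℝ)).smul_const ((0 : Y), π v)
    simpa [ℓ] using h6.const_add (Φ p)
  have hev : ∀ᶠ τ in 𝓝 (0:ℝ), Φ (g (ℓ τ)) = ℓ τ := by
    have hc : Tendsto ℓ (𝓝 0) (𝓝 (Φ p)) := by
      rw [← hℓ0]; exact (hℓsmooth.continuous.continuousAt)
    exact hc.eventually hg_left
  refine ⟨fun τ => g (ℓ τ), by simp [hℓ0, hg0], ?_, ?_, ?_⟩
  · have hg2 : ContDiffAt ℝ 2 g (ℓ 0) := by rw [hℓ0]; exact hg_smooth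
    exact hg2.comp (0:ℝ) hℓsmooth.contDiffAt
  · have hgf : HasFDerivAt g (e.symm : Y × K →L[ℝ] X) (ℓ 0) := by
      rw [hℓ0]; exact hg_strict.hasFDerivAt
    have h7 : HasDerivAt (fun τ => g (ℓ τ)) (e.symm ((0 : Y), π v)) 0 :=
      hgf.comp_hasDerivAt 0 hℓd
    have h8 : e v = ((0 : Y), π v) := by rw [he_coe, hv]
    rw [← h8, ContinuousLinearEquiv.symm_apply_apply] at h7
    exact h7
  · filter_upwards [hev] with τ h9
    have h10 : G (g (ℓ τ)) = (ℓ τ).1 := congrArg Prod.fst h9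
    rw [h10]
    simp [ℓ]
    rfl

theorem sel_mul_apply {k l : ℕ} (p : Fin k → Prop) (N : Matrix (Fin k) (Fin l) ℝ)
    (i : {i // p i}) (j : Fin l) : (sel p * N) i j = N i.1 j := by
  simp only [Matrix.mul_apply, sel, Matrix.of_apply]
  rw [Finset.sum_eq_single i.1]
  · simp
  · intro b _ hb; simp [Ne.symm hb]
  · intro hb; exact absurd (Finset.mem_univ _) hb

theorem selT_mul_apply {k : ℕ} (p : Fin k → Prop)
    {l : ℕ} (N : Matrix {i // p i} (Fin l) ℝ) (i : Fin k) (j : Fin l) :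
    ((sel p)ᵀ * N) i j = if h : p i then N ⟨i, h⟩ j else 0 := by
  simp only [Matrix.mul_apply, Matrix.transpose_apply, sel, Matrix.of_apply]
  by_cases h : p i
  · rw [Finset.sum_eq_single (⟨i, h⟩ : {i // p i})]
    · simp [h]
    · intro b _ hb
      have : (b : Fin k) ≠ i := fun hc => hb (Subtype.ext hc)
      simp [this]
    · intro hb; exact absurd (Finset.mem_univ _) hb
  · rw [dif_neg h]
    apply Finset.sum_eq_zero
    intro b _
    have : (b : Fin k) ≠ i := fun hc => h (hc ▸ b.2)
    simp [this]

theorem sel_mulVec {k l : ℕ} (p : Fin k → Prop) (N : Matrix (Fin k) (Fin l) ℝ)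
    (d : Fin l → ℝ) (i : {i // p i}) : ((sel p * N) *ᵥ d) i = (N *ᵥ d) i.1 := by
  simp only [Matrix.mulVec, dotProduct]
  exact Finset.sum_congr rfl (fun j _ => by rw [sel_mul_apply])

/-- A matrix with full row rank has surjective `mulVec`. -/
theorem mulVec_surjective_of_rank {m n : Type*} [Fintype m] [Fintype n] [DecidableEq n]
    (A : Matrix m n ℝ) (h : A.rank = Fintype.card m) :
    Function.Surjective (fun v => A *ᵥ v) := by
  have h1 : LinearMap.range A.mulVecLin = ⊤ := by
    apply Submodule.eq_top_of_finrank_eq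
    rw [← Matrix.rank, h, Module.finrank_pi]
  intro y
  have hy : y ∈ LinearMap.range A.mulVecLin := h1 ▸ Submodule.mem_top
  obtain ⟨v, hv⟩ := hy
  exact ⟨v, hv⟩

/-- A strictly lower triangular perturbation of the identity has unit determinant. -/
theorem isUnit_det_one_sub_strictLower {s : ℕ} (N : Matrix (Fin s) (Fin s) ℝ)
    (h : ∀ i j, i ≤ j → N i j = 0) : IsUnit (1 - N).det := by
  have hdet : (1 - N).det = 1 := by
    have htri : (1 - N).BlockTriangular OrderDual.toDual := by
      intro i j hij
      have hij' : i < j := hij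
      simp [Matrix.sub_apply, Matrix.one_apply, ne_of_lt hij', h i j (le_of_lt hij')]
    rw [Matrix.det_of_lowerTriangular _ htri]
    have hone : ∀ i, (1 - N) i i = 1 := fun i => by
      simp [Matrix.sub_apply, Matrix.one_apply, h i i (le_refl i)]
    simp [hone]
  rw [hdet]; exact isUnit_one

/-- Any continuous linear map into the reals applied to a pair, via the partial Jacobians. -/
theorem fderiv_eq_jac {n s m : ℕ} (c : (Fin n → ℝ) × (Fin s → ℝ) → Fin m → ℝ)
    (p : (Fin n → ℝ) × (Fin s → ℝ)) (w : Fin n → ℝ) (u : Fin s → ℝ) :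
    fderiv ℝ c p (w, u) = jac1 c p *ᵥ w + jac2 c p *ᵥ u := by
  have hsplit : ((w, u) : (Fin n → ℝ) × (Fin s → ℝ)) = (w, 0) + (0, u) := by
    ext <;> simp
  rw [hsplit, map_add]
  congr 1
  · have h1 : fderiv ℝ c p (w, (0 : Fin s → ℝ)) =
        ((fderiv ℝ c p).comp (ContinuousLinearMap.inl ℝ (Fin n → ℝ) (Fin s → ℝ))) w := rfl
    rw [h1, clm_pi_apply]
    ext i
    simp only [Finset.sum_apply, Pi.smul_apply, smul_eq_mul, ContinuousLinearMap.comp_apply,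
      ContinuousLinearMap.inl_apply]
    simp only [Matrix.mulVec, dotProduct, jac1, Matrix.of_apply]
    exact Finset.sum_congr rfl (fun j _ => mul_comm _ _)
  · have h1 : fderiv ℝ c p ((0 : Fin n → ℝ), u) =
        ((fderiv ℝ c p).comp (ContinuousLinearMap.inr ℝ (Fin n → ℝ) (Fin s → ℝ))) u := rfl
    rw [h1, clm_pi_apply]
    ext i
    simp only [Finset.sum_apply, Pi.smul_apply, smul_eq_mul, ContinuousLinearMap.comp_apply,
      ContinuousLinearMap.inr_apply]
    simp only [Matrix.mulVec, dotProduct, jac2, Matrix.of_apply]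
    exact Finset.sum_congr rfl (fun j _ => mul_comm _ _)

/-- Dot product with a fixed vector, as a continuous linear map. -/
def dotCLM {m : ℕ} (l : Fin m → ℝ) : (Fin m → ℝ) →L[ℝ] ℝ :=
  ∑ j, l j • ContinuousLinearMap.proj j

theorem dotCLM_apply {m : ℕ} (l : Fin m → ℝ) (v : Fin m → ℝ) : dotCLM l v = l ⬝ᵥ v := by
  simp [dotCLM, dotProduct, ContinuousLinearMap.sum_apply]

theorem real_sign_mul_self (x : ℝ) : Real.sign x * x = |x| := by
  rcases lt_trichotomy x 0 with h | h | h
  · rw [Real.sign_of_neg h, abs_of_neg h]; ring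
  · simp [h]
  · rw [Real.sign_of_pos h, abs_of_pos h]; ring

theorem real_sign_cases (x : ℝ) : Real.sign x = -1 ∨ Real.sign x = 0 ∨ Real.sign x = 1 := by
  rcases lt_trichotomy x 0 with h | h | h
  · exact Or.inl (Real.sign_of_neg h)
  · exact Or.inr (Or.inl (by simp [h]))
  · exact Or.inr (Or.inr (Real.sign_of_pos h))

theorem real_sign_sq (x : ℝ) (hx : x ≠ 0) : Real.sign x * Real.sign x = 1 := by
  rcases lt_trichotomy x 0 with h | h | h
  · rw [Real.sign_of_neg h]; ring
  · exact absurd h hx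
  · rw [Real.sign_of_pos h]; ring

theorem dot_mulVec_eq {m k : ℕ} (v : Fin m → ℝ) (A : Matrix (Fin m) (Fin k) ℝ) (w : Fin k → ℝ) :
    v ⬝ᵥ (A *ᵥ w) = (Aᵀ *ᵥ v) ⬝ᵥ w := by
  rw [Matrix.dotProduct_mulVec, Matrix.mulVec_transpose]

theorem diffAt_deriv {E : Type*} [NormedAddCommGroup E] [NormedSpace ℝ E] {g : ℝ → E} {x : ℝ}
    (hg : ContDiffAt ℝ 2 g x) : DifferentiableAt ℝ (deriv g) x := by
  have h1 : ContDiffAt ℝ 1 (fderiv ℝ g) x := hg.fderiv_right (by norm_num)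
  have h2 : DifferentiableAt ℝ (fun τ => fderiv ℝ g τ 1) x :=
    (h1.differentiableAt (by norm_num)).clm_apply (differentiableAt_const 1)
  have h3 : deriv g = fun τ => fderiv ℝ g τ 1 := by
    funext τ; rw [← fderiv_apply_one_eq_deriv]
  rw [h3]; exact h2

end Helpers

set_option maxHeartbeats 1000000

/-- Second order necessary conditions for the abs-normal NLP under LIKQ. -/
theorem stmt16 {n s m₁ m₂ : ℕ}
    (Dt : Set (Fin n → ℝ)) (Dz : Set (Fin s → ℝ))
    (hDt : IsOpen Dt) (hDz : IsOpen Dz)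
    (hsym : ∀ z ∈ Dz, ∀ σ : Fin s → ℝ, (∀ i, σ i = -1 ∨ σ i = 0 ∨ σ i = 1) →
      (fun i => σ i * z i) ∈ Dz)
    (f : (Fin n → ℝ) → ℝ)
    (cE : (Fin n → ℝ) × (Fin s → ℝ) → Fin m₁ → ℝ)
    (cI : (Fin n → ℝ) × (Fin s → ℝ) → Fin m₂ → ℝ)
    (cZ : (Fin n → ℝ) × (Fin s → ℝ) → Fin s → ℝ)
    (hf : ContDiffOn ℝ 2 f Dt)
    (hcE : ContDiffOn ℝ 2 cE (Dt ×ˢ Dz))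
    (hcI : ContDiffOn ℝ 2 cI (Dt ×ˢ Dz))
    (hcZ : ContDiffOn ℝ 2 cZ (Dt ×ˢ Dz))
    (hlow : ∀ p ∈ Dt ×ˢ Dz, ∀ i j : Fin s, i ≤ j → jac2 cZ p i j = 0)
    (tstar : Fin n → ℝ) (zstar : Fin s → ℝ)
    (ht : tstar ∈ Dt) (hz : zstar ∈ Dz)
    (hfeasE : cE (tstar, vabs zstar) = 0)
    (hfeasI : ∀ j, 0 ≤ cI (tstar, vabs zstar) j)
    (hfeasZ : cZ (tstar, vabs zstar) = zstar)
    (hmin : IsLocalMinOn (fun q : (Fin n → ℝ) × (Fin s → ℝ) => f q.1)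
      {q | q.1 ∈ Dt ∧ q.2 ∈ Dz ∧ cE (q.1, vabs q.2) = 0 ∧
        (∀ j, 0 ≤ cI (q.1, vabs q.2) j) ∧ cZ (q.1, vabs q.2) = q.2}
      (tstar, zstar))
    (hLIKQ : (likqJ cE cI cZ (tstar, vabs zstar) (fun i => Real.sign (zstar i))
        (fun j => cI (tstar, vabs zstar) j = 0) (fun i => zstar i = 0)).rank
      = m₁ + Fintype.card {j // cI (tstar, vabs zstar) j = 0} +
          Fintype.card {i // zstar i = 0})
    -- kink stationarity multipliers
    (lE : Fin m₁ → ℝ) (lI : Fin m₂ → ℝ) (lZ : Fin s → ℝ)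
    (hstat : (fun j => fderiv ℝ f tstar (Pi.single j 1)) +
      (jac1 cE (tstar, vabs zstar))ᵀ *ᵥ lE -
      (jac1 cI (tstar, vabs zstar))ᵀ *ᵥ lI +
      (jac1 cZ (tstar, vabs zstar))ᵀ *ᵥ lZ = 0)
    (hgrow : ∀ i, zstar i = 0 →
      |lZ i| ≤ ((jac2 cE (tstar, vabs zstar))ᵀ *ᵥ lE -
        (jac2 cI (tstar, vabs zstar))ᵀ *ᵥ lI +
        (jac2 cZ (tstar, vabs zstar))ᵀ *ᵥ lZ) i)
    (hsig : ∀ i, zstar i ≠ 0 →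
      ((jac2 cE (tstar, vabs zstar))ᵀ *ᵥ lE -
        (jac2 cI (tstar, vabs zstar))ᵀ *ᵥ lI +
        (jac2 cZ (tstar, vabs zstar))ᵀ *ᵥ lZ) i = Real.sign (zstar i) * lZ i)
    (hlI : ∀ j, 0 ≤ lI j)
    (hlIc : lI ⬝ᵥ cI (tstar, vabs zstar) = 0) :
    ∀ d : Fin n → ℝ,
      likqJ cE cI cZ (tstar, vabs zstar) (fun i => Real.sign (zstar i))
        (fun j => cI (tstar, vabs zstar) j = 0) (fun i => zstar i = 0) *ᵥ d = 0 →
      0 ≤ fderiv ℝ (fderiv ℝ (Lagr f cE cI cZ lE lI lZ)) (tstar, vabs zstar)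
            (d, ((sel fun i => zstar i ≠ 0)ᵀ * ((sel fun i => zstar i ≠ 0) *
              (Matrix.diagonal (fun i => Real.sign (zstar i)) *
                Wmat cZ (tstar, vabs zstar) (fun i => Real.sign (zstar i))))) *ᵥ d)
            (d, ((sel fun i => zstar i ≠ 0)ᵀ * ((sel fun i => zstar i ≠ 0) *
              (Matrix.diagonal (fun i => Real.sign (zstar i)) *
                Wmat cZ (tstar, vabs zstar) (fun i => Real.sign (zstar i))))) *ᵥ d) := by
  classical
  intro d hd
  -- abbreviations
  set pstar : (Fin n → ℝ) × (Fin s → ℝ) := (tstar, vabs zstar) with hpstar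
  set σ : Fin s → ℝ := fun i => Real.sign (zstar i) with hσdef
  set Apred : Fin m₂ → Prop := fun j => cI pstar j = 0 with hApred
  set αpred : Fin s → Prop := fun i => zstar i = 0 with hαpred
  set αc : Fin s → Prop := fun i => zstar i ≠ 0 with hαc
  set Dσ : Matrix (Fin s) (Fin s) ℝ := Matrix.diagonal σ with hDσdef
  set j1E := jac1 cE pstar with hj1E
  set j2E := jac2 cE pstar with hj2E
  set j1I := jac1 cI pstar with hj1I
  set j2I := jac2 cI pstar with hj2I
  set j1Z := jac1 cZ pstar with hj1Z
  set j2Z := jac2 cZ pstar with hj2Z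
  set B : Matrix (Fin s) (Fin s) ℝ := 1 - j2Z * Dσ with hBdef
  set Wm := Wmat cZ pstar σ with hWmdef
  have hWm2 : Wm = B⁻¹ * j1Z := rfl
  set J := likqJ cE cI cZ pstar σ Apred αpred with hJdef
  -- basic sign facts
  have hsignval : ∀ i, σ i = -1 ∨ σ i = 0 ∨ σ i = 1 := fun i => real_sign_cases _
  have habs : vabs zstar = fun i => σ i * zstar i := by
    funext i
    rw [vabs, ← real_sign_mul_self]
  have hpmem : pstar ∈ Dt ×ˢ Dz := by
    rw [hpstar]
    refine Set.mk_mem_prod ht ?_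
    rw [habs]
    exact hsym zstar hz σ hsignval
  have hopen : IsOpen (Dt ×ˢ Dz) := hDt.prod hDz
  have hnhds : Dt ×ˢ Dz ∈ 𝓝 pstar := hopen.mem_nhds hpmem
  have hcEAt : ContDiffAt ℝ 2 cE pstar := hcE.contDiffAt hnhds
  have hcIAt : ContDiffAt ℝ 2 cI pstar := hcI.contDiffAt hnhds
  have hcZAt : ContDiffAt ℝ 2 cZ pstar := hcZ.contDiffAt hnhds
  have hfAt : ContDiffAt ℝ 2 f tstar := hf.contDiffAt (hDt.mem_nhds ht)
  have hone : (2 : WithTop ℕ∞) ≠ 0 := by norm_num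
  have hcEd : DifferentiableAt ℝ cE pstar := hcEAt.differentiableAt hone
  have hcId : DifferentiableAt ℝ cI pstar := hcIAt.differentiableAt hone
  have hcZd : DifferentiableAt ℝ cZ pstar := hcZAt.differentiableAt hone
  have hfd : DifferentiableAt ℝ f tstar := hfAt.differentiableAt hone
  -- invertibility of B
  have hBdet : IsUnit B.det := by
    apply isUnit_det_one_sub_strictLower
    intro i j hij
    rw [Matrix.mul_diagonal]
    rw [show j2Z i j = 0 from hlow pstar hpmem i j hij]
    ring
  have hBW : B * Wm = j1Z := by
    rw [hWm2, ← Matrix.mul_assoc, Matrix.mul_nonsing_inv _ hBdet, Matrix.one_mul]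
  -- J has surjective mulVec
  have hJsurj : ∀ y, ∃ x, J *ᵥ x = y := by
    have hcardA : Fintype.card {j // Apred j} = Fintype.card {j // cI pstar j = 0} :=
      Fintype.card_congr (Equiv.subtypeEquivRight (fun j => by rw [hApred]))
    have hcardα : Fintype.card {i // αpred i} = Fintype.card {i // zstar i = 0} :=
      Fintype.card_congr (Equiv.subtypeEquivRight (fun i => by rw [hαpred]))
    have h := mulVec_surjective_of_rank J (by
      rw [hLIKQ]
      simp only [Fintype.card_sum, Fintype.card_fin, hcardA, hcardα]
      omega)
    intro y
    obtain ⟨x, hx⟩ := h y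
    exact ⟨x, hx⟩
  -- the linear map S
  set Sc : ((Fin n → ℝ) × (Fin s → ℝ)) →L[ℝ] ((Fin n → ℝ) × (Fin s → ℝ)) :=
    (ContinuousLinearMap.id ℝ (Fin n → ℝ)).prodMap
      (LinearMap.toContinuousLinearMap (Matrix.mulVecLin Dσ)) with hScdef
  have hSc_apply : ∀ x : (Fin n → ℝ) × (Fin s → ℝ), Sc x = (x.1, Dσ *ᵥ x.2) := fun x => rfl
  have hDσ_apply : ∀ (u : Fin s → ℝ) i, (Dσ *ᵥ u) i = σ i * u i := by
    intro u i
    rw [hDσdef]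
    simp [Matrix.mulVec, dotProduct, Matrix.diagonal, Finset.sum_ite_eq']
  have hScphat : Sc (tstar, zstar) = pstar := by
    rw [hSc_apply]
    refine Prod.ext rfl ?_
    show Dσ *ᵥ zstar = vabs zstar
    funext i
    rw [hDσ_apply, habs]
  -- the extended constraint map G and its derivative M
  set restrA : (Fin m₂ → ℝ) →L[ℝ] ({j // Apred j} → ℝ) :=
    ContinuousLinearMap.pi (fun j => ContinuousLinearMap.proj j.1) with hrA
  set restrα : (Fin s → ℝ) →L[ℝ] ({i // αpred i} → ℝ) :=
    ContinuousLinearMap.pi (fun i => ContinuousLinearMap.proj i.1) with hrα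
  set sndX := ContinuousLinearMap.snd ℝ (Fin n → ℝ) (Fin s → ℝ) with hsndX
  have hrA_apply : ∀ v (j : {j // Apred j}), restrA v j = v j.1 := fun v j => rfl
  have hrα_apply : ∀ v (i : {i // αpred i}), restrα v i = v i.1 := fun v i => rfl
  set G : (Fin n → ℝ) × (Fin s → ℝ) →
      (Fin m₁ → ℝ) × (({j // Apred j} → ℝ) × (({i // αpred i} → ℝ) × (Fin s → ℝ))) := fun x =>
    (cE (Sc x), (restrA (cI (Sc x)), (restrα x.2, cZ (Sc x) - x.2))) with hGdef
  set DcE := fderiv ℝ cE pstar with hDcE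
  set DcI := fderiv ℝ cI pstar with hDcI
  set DcZ := fderiv ℝ cZ pstar with hDcZ
  set M := (DcE.comp Sc).prod ((restrA.comp (DcI.comp Sc)).prod
      ((restrα.comp sndX).prod ((DcZ.comp Sc) - sndX))) with hMdef
  have hGd : HasFDerivAt G M (tstar, zstar) := by
    have hE1 : HasFDerivAt cE DcE (Sc (tstar, zstar)) := by rw [hScphat]; exact hcEd.hasFDerivAt
    have hI1 : HasFDerivAt cI DcI (Sc (tstar, zstar)) := by rw [hScphat]; exact hcId.hasFDerivAt
    have hZ1 : HasFDerivAt cZ DcZ (Sc (tstar, zstar)) := by rw [hScphat]; exact hcZd.hasFDerivAt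
    refine HasFDerivAt.prodMk (hE1.comp _ Sc.hasFDerivAt) (HasFDerivAt.prodMk ?_ (HasFDerivAt.prodMk ?_ ?_))
    · exact restrA.hasFDerivAt.comp _ (hI1.comp _ Sc.hasFDerivAt)
    · exact (restrα.comp sndX).hasFDerivAt
    · exact (hZ1.comp _ Sc.hasFDerivAt).sub sndX.hasFDerivAt
  have hGc : ContDiffAt ℝ 2 G (tstar, zstar) := by
    have hScc : ContDiffAt ℝ 2 Sc (tstar, zstar) := Sc.contDiff.contDiffAt
    have hE1 : ContDiffAt ℝ 2 cE (Sc (tstar, zstar)) := by rw [hScphat]; exact hcEAt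
    have hI1 : ContDiffAt ℝ 2 cI (Sc (tstar, zstar)) := by rw [hScphat]; exact hcIAt
    have hZ1 : ContDiffAt ℝ 2 cZ (Sc (tstar, zstar)) := by rw [hScphat]; exact hcZAt
    refine ContDiffAt.prodMk (hE1.comp _ hScc) (ContDiffAt.prodMk ?_ (ContDiffAt.prodMk ?_ ?_))
    · exact (restrA.contDiff.contDiffAt).comp _ (hI1.comp _ hScc)
    · exact ((restrα.comp sndX).contDiff.contDiffAt)
    · exact (hZ1.comp _ hScc).sub (sndX.contDiff.contDiffAt)
  -- explicit formula for M
  have hMapp : ∀ (w : Fin n → ℝ) (u : Fin s → ℝ), M (w, u) =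
      (j1E *ᵥ w + (j2E * Dσ) *ᵥ u,
       ((fun j : {j // Apred j} => (j1I *ᵥ w + (j2I * Dσ) *ᵥ u) j.1),
        ((fun i : {i // αpred i} => u i.1),
         j1Z *ᵥ w + (j2Z * Dσ) *ᵥ u - u))) := by
    intro w u
    have hSwu : Sc (w, u) = (w, Dσ *ᵥ u) := hSc_apply _
    have hE : DcE (Sc (w, u)) = j1E *ᵥ w + (j2E * Dσ) *ᵥ u := by
      rw [hSwu, hDcE, fderiv_eq_jac, ← hj1E, ← hj2E, ← Matrix.mulVec_mulVec]
    have hI : DcI (Sc (w, u)) = j1I *ᵥ w + (j2I * Dσ) *ᵥ u := by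
      rw [hSwu, hDcI, fderiv_eq_jac, ← hj1I, ← hj2I, ← Matrix.mulVec_mulVec]
    have hZ : DcZ (Sc (w, u)) = j1Z *ᵥ w + (j2Z * Dσ) *ᵥ u := by
      rw [hSwu, hDcZ, fderiv_eq_jac, ← hj1Z, ← hj2Z, ← Matrix.mulVec_mulVec]
    show (DcE (Sc (w, u)), (restrA (DcI (Sc (w, u))), (restrα u, DcZ (Sc (w, u)) - u))) = _
    rw [hE, hI, hZ]
    refine Prod.ext rfl (Prod.ext ?_ (Prod.ext ?_ rfl))
    · funext j; exact hrA_apply _ j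
    · funext i; exact hrα_apply _ i
  -- splitting of J *ᵥ
  have hJmul : ∀ (v : Fin n → ℝ),
      J *ᵥ v = Sum.elim (((j1E + j2E * Dσ * Wm)) *ᵥ v)
        (Sum.elim (fun j : {j // Apred j} => ((j1I + j2I * Dσ * Wm) *ᵥ v) j.1)
          (fun i : {i // αpred i} => (Wm *ᵥ v) i.1)) := by
    intro v
    have h1 : J = Matrix.fromRows (j1E + j2E * Dσ * Wm)
        (Matrix.fromRows (sel Apred * (j1I + j2I * Dσ * Wm)) (sel αpred * Wm)) := rfl
    rw [h1, Matrix.fromRows_mulVec, Matrix.fromRows_mulVec]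
    funext x
    rcases x with i | (j | i)
    · rfl
    · simp only [Sum.elim_inr, Sum.elim_inl]
      exact sel_mulVec _ _ _ j
    · simp only [Sum.elim_inr]
      exact sel_mulVec _ _ _ i
  -- surjectivity of M
  have hMsurj : Function.Surjective M := by
    rintro ⟨a, b, e, w⟩
    obtain ⟨d', hd'⟩ := hJsurj (Sum.elim (a + (j2E * Dσ * B⁻¹) *ᵥ w)
      (Sum.elim (fun j : {j // Apred j} => b j + ((j2I * Dσ * B⁻¹) *ᵥ w) j.1)
        (fun i : {i // αpred i} => e i + (B⁻¹ *ᵥ w) i.1)))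
    rw [hJmul] at hd'
    have hd1 : (j1E + j2E * Dσ * Wm) *ᵥ d' = a + (j2E * Dσ * B⁻¹) *ᵥ w := by
      funext i; exact congrFun hd' (Sum.inl i)
    have hd2 : ∀ j : {j // Apred j},
        ((j1I + j2I * Dσ * Wm) *ᵥ d') j.1 = b j + ((j2I * Dσ * B⁻¹) *ᵥ w) j.1 :=
      fun j => congrFun hd' (Sum.inr (Sum.inl j))
    have hd3 : ∀ i : {i // αpred i},
        (Wm *ᵥ d') i.1 = e i + (B⁻¹ *ᵥ w) i.1 :=
      fun i => congrFun hd' (Sum.inr (Sum.inr i))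
    set u : Fin s → ℝ := Wm *ᵥ d' - B⁻¹ *ᵥ w with hu'
    have hBu : B *ᵥ u = j1Z *ᵥ d' - w := by
      rw [hu', Matrix.mulVec_sub, Matrix.mulVec_mulVec, Matrix.mulVec_mulVec, hBW,
        Matrix.mul_nonsing_inv _ hBdet, Matrix.one_mulVec]
    have hdecomp : ∀ (A2 : Matrix (Fin m₁) (Fin s) ℝ), True := fun _ => trivial
    refine ⟨(d', u), ?_⟩
    rw [hMapp]
    refine Prod.ext ?_ (Prod.ext ?_ (Prod.ext ?_ ?_))
    · show j1E *ᵥ d' + (j2E * Dσ) *ᵥ u = a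
      rw [hu', Matrix.mulVec_sub, Matrix.mulVec_mulVec, Matrix.mulVec_mulVec]
      have := congrArg (fun x => x - (j2E * Dσ * B⁻¹) *ᵥ w) hd1
      simp only [Matrix.add_mulVec] at this
      rw [show j2E * Dσ * Wm = j2E * Dσ * Wm from rfl] at this
      have h2 : j1E *ᵥ d' + (j2E * Dσ * Wm) *ᵥ d' - (j2E * Dσ * B⁻¹) *ᵥ w
          = a + (j2E * Dσ * B⁻¹) *ᵥ w - (j2E * Dσ * B⁻¹) *ᵥ w := this
      rw [Matrix.mul_assoc j2E Dσ Wm, Matrix.mul_assoc j2E Dσ B⁻¹] at h2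
      rw [← Matrix.mul_assoc j2E Dσ Wm, ← Matrix.mul_assoc j2E Dσ B⁻¹] at h2
      abel_nf at h2 ⊢
      rw [h2]
    · show (fun j : {j // Apred j} => (j1I *ᵥ d' + (j2I * Dσ) *ᵥ u) j.1) = b
      funext j
      have h3 := hd2 j
      rw [Matrix.add_mulVec] at h3
      have h4 : (j1I *ᵥ d') j.1 + ((j2I * Dσ * Wm) *ᵥ d') j.1
          = b j + ((j2I * Dσ * B⁻¹) *ᵥ w) j.1 := h3
      rw [hu', Matrix.mulVec_sub, Matrix.mulVec_mulVec, Matrix.mulVec_mulVec]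
      simp only [Pi.add_apply, Pi.sub_apply]
      rw [Matrix.mul_assoc j2I Dσ Wm, Matrix.mul_assoc j2I Dσ B⁻¹] at h4
      rw [← Matrix.mul_assoc j2I Dσ Wm, ← Matrix.mul_assoc j2I Dσ B⁻¹] at h4
      linarith [h4]
    · show (fun i : {i // αpred i} => u i.1) = e
      funext i
      have h5 := hd3 i
      rw [hu']
      simp only [Pi.sub_apply]
      linarith [h5]
    · show j1Z *ᵥ d' + (j2Z * Dσ) *ᵥ u - u = w
      have h6 : B *ᵥ u = u - (j2Z * Dσ) *ᵥ u := by
        rw [hBdef, Matrix.sub_mulVec, Matrix.one_mulVec]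
      calc j1Z *ᵥ d' + (j2Z * Dσ) *ᵥ u - u
          = j1Z *ᵥ d' - (u - (j2Z * Dσ) *ᵥ u) := by abel
        _ = j1Z *ᵥ d' - (j1Z *ᵥ d' - w) := by rw [← h6, hBu]
        _ = w := by abel
  -- the kernel vector
  set v0 : (Fin n → ℝ) × (Fin s → ℝ) := (d, Wm *ᵥ d) with hv0
  have hvker : M v0 = 0 := by
    rw [hv0, hMapp]
    rw [hJmul] at hd
    have k1 : (j1E + j2E * Dσ * Wm) *ᵥ d = 0 := by
      funext i; exact congrFun hd (Sum.inl i)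
    have k2 : ∀ j : {j // Apred j}, ((j1I + j2I * Dσ * Wm) *ᵥ d) j.1 = 0 :=
      fun j => congrFun hd (Sum.inr (Sum.inl j))
    have k3 : ∀ i : {i // αpred i}, (Wm *ᵥ d) i.1 = 0 :=
      fun i => congrFun hd (Sum.inr (Sum.inr i))
    have hz4 : j1Z *ᵥ d + (j2Z * Dσ) *ᵥ (Wm *ᵥ d) - Wm *ᵥ d = 0 := by
      have h6 : B *ᵥ (Wm *ᵥ d) = Wm *ᵥ d - (j2Z * Dσ) *ᵥ (Wm *ᵥ d) := by
        rw [hBdef, Matrix.sub_mulVec, Matrix.one_mulVec]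
      calc j1Z *ᵥ d + (j2Z * Dσ) *ᵥ (Wm *ᵥ d) - Wm *ᵥ d
          = j1Z *ᵥ d - (Wm *ᵥ d - (j2Z * Dσ) *ᵥ (Wm *ᵥ d)) := by abel
        _ = j1Z *ᵥ d - (B * Wm) *ᵥ d := by rw [← h6, Matrix.mulVec_mulVec]
        _ = 0 := by rw [hBW]; abel
    refine Prod.ext ?_ (Prod.ext ?_ (Prod.ext ?_ ?_))
    · show j1E *ᵥ d + (j2E * Dσ) *ᵥ (Wm *ᵥ d) = 0
      rw [Matrix.mulVec_mulVec]
      rw [Matrix.add_mulVec] at k1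
      exact k1
    · show (fun j : {j // Apred j} => (j1I *ᵥ d + (j2I * Dσ) *ᵥ (Wm *ᵥ d)) j.1) = 0
      funext j
      have := k2 j
      rw [Matrix.add_mulVec] at this
      rw [Matrix.mulVec_mulVec]
      exact this
    · show (fun i : {i // αpred i} => (Wm *ᵥ d) i.1) = 0
      funext i; exact k3 i
    · exact hz4
  -- the curve
  obtain ⟨γ, hγ0, hγcd, hγd, hγG⟩ := curve_exists G (tstar, zstar) M hGc hGd hMsurj v0 hvker
  -- value of G at the base point
  have hGphat : G (tstar, zstar) = (0, (0, (0, 0))) := by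
    show (cE (Sc (tstar, zstar)), (restrA (cI (Sc (tstar, zstar))),
      (restrα zstar, cZ (Sc (tstar, zstar)) - zstar))) = _
    rw [hScphat]
    refine Prod.ext hfeasE (Prod.ext ?_ (Prod.ext ?_ ?_))
    · funext j; exact j.2
    · funext i; exact i.2
    · rw [hfeasZ]; simp
  have hγG' : ∀ᶠ τ in 𝓝 (0:ℝ), cE (Sc (γ τ)) = 0 ∧
      (∀ j : {j // Apred j}, cI (Sc (γ τ)) j.1 = 0) ∧
      (∀ i : {i // αpred i}, (γ τ).2 i.1 = 0) ∧ cZ (Sc (γ τ)) = (γ τ).2 := by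
    filter_upwards [hγG] with τ hτ
    rw [hGphat] at hτ
    have c1 : cE (Sc (γ τ)) = 0 := congrArg Prod.fst hτ
    have c2 : restrA (cI (Sc (γ τ))) = 0 := congrArg (fun x => x.2.1) hτ
    have c3 : restrα (γ τ).2 = 0 := congrArg (fun x => x.2.2.1) hτ
    have c4 : cZ (Sc (γ τ)) - (γ τ).2 = 0 := congrArg (fun x => x.2.2.2) hτ
    exact ⟨c1, fun j => congrFun c2 j, fun i => congrFun c3 i, sub_eq_zero.1 c4⟩
  -- continuity facts
  have hγcont : ContinuousAt γ 0 := hγcd.continuousAt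
  have htend : Tendsto γ (𝓝 0) (𝓝 (tstar, zstar)) := by
    have := hγcont.tendsto
    rwa [hγ0] at this
  -- eventual sign agreement
  have hvabs : ∀ᶠ τ in 𝓝 (0:ℝ), vabs ((γ τ).2) = Dσ *ᵥ (γ τ).2 := by
    have hper : ∀ i : Fin s, ∀ᶠ τ in 𝓝 (0:ℝ), |(γ τ).2 i| = σ i * (γ τ).2 i := by
      intro i
      by_cases hzi : zstar i = 0
      · filter_upwards [hγG'] with τ hτ
        rw [hτ.2.2.1 ⟨i, hzi⟩]
        simp
      · have hco : Tendsto (fun τ => (γ τ).2 i) (𝓝 0) (𝓝 (zstar i)) := by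
          have h1 : Continuous (fun q : (Fin n → ℝ) × (Fin s → ℝ) => q.2 i) :=
            (continuous_apply i).comp continuous_snd
          exact (h1.tendsto _).comp htend
        rcases lt_or_gt_of_ne hzi with hneg | hpos
        · filter_upwards [hco.eventually (eventually_lt_nhds hneg)] with τ hτ
          rw [abs_of_neg hτ, show σ i = Real.sign (zstar i) from rfl, Real.sign_of_neg hneg]
          ring
        · filter_upwards [hco.eventually (eventually_gt_nhds hpos)] with τ hτ
          rw [abs_of_pos hτ, show σ i = Real.sign (zstar i) from rfl, Real.sign_of_pos hpos]
          ring
    have hall := (Filter.eventually_all).2 hper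
    filter_upwards [hall] with τ hτ
    funext i
    rw [show vabs ((γ τ).2) i = |(γ τ).2 i| from rfl, hDσ_apply]
    exact hτ i
  -- complementarity
  have hlI0 : ∀ j, ¬ Apred j → lI j = 0 := by
    intro j hj
    have hterms : ∀ k ∈ Finset.univ, 0 ≤ lI k * cI pstar k :=
      fun k _ => mul_nonneg (hlI k) (hfeasI k)
    have hsum : ∑ k, lI k * cI pstar k = 0 := hlIc
    have hzero := (Finset.sum_eq_zero_iff_of_nonneg hterms).1 hsum j (Finset.mem_univ j)
    rcases mul_eq_zero.1 hzero with h | h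
    · exact h
    · exact absurd h hj
  -- feasibility of the curve
  have hfeas_ev : ∀ᶠ τ in 𝓝 (0:ℝ), γ τ ∈
      {q : (Fin n → ℝ) × (Fin s → ℝ) | q.1 ∈ Dt ∧ q.2 ∈ Dz ∧ cE (q.1, vabs q.2) = 0 ∧
        (∀ j, 0 ≤ cI (q.1, vabs q.2) j) ∧ cZ (q.1, vabs q.2) = q.2} := by
    have hmemD : ∀ᶠ τ in 𝓝 (0:ℝ), γ τ ∈ Dt ×ˢ Dz :=
      htend.eventually (hopen.eventually_mem ⟨ht, hz⟩)
    have hIpos : ∀ᶠ τ in 𝓝 (0:ℝ), ∀ j : Fin m₂, ¬ Apred j → 0 < cI (Sc (γ τ)) j := by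
      rw [Filter.eventually_all]
      intro j
      by_cases hj : Apred j
      · filter_upwards with τ hc; exact absurd hj hc
      · have hpos : 0 < cI pstar j := lt_of_le_of_ne (hfeasI j) (fun hc => hj hc.symm)
        have t1 : Tendsto (fun τ => Sc (γ τ)) (𝓝 0) (𝓝 pstar) := by
          rw [← hScphat]
          exact (Sc.continuous.tendsto _).comp htend
        have t2 : Tendsto (fun τ => cI (Sc (γ τ)) j) (𝓝 0) (𝓝 (cI pstar j)) := by
          have h1 : ContinuousAt (fun x => cI x j) pstar :=
            ((continuous_apply j).continuousAt).comp hcId.continuousAt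
          exact h1.tendsto.comp t1
        filter_upwards [t2.eventually (eventually_gt_nhds hpos)] with τ hτ _
        exact hτ
    filter_upwards [hmemD, hγG', hvabs, hIpos] with τ h1 h2 h3 h4
    have hkey : ((γ τ).1, vabs (γ τ).2) = Sc (γ τ) := by
      rw [hSc_apply, h3]
    refine ⟨h1.1, h1.2, ?_, ?_, ?_⟩
    · rw [hkey]; exact h2.1
    · intro j
      rw [hkey]
      by_cases hj : Apred j
      · exact le_of_eq (h2.2.1 ⟨j, hj⟩).symm
      · exact le_of_lt (h4 j hj)
    · rw [hkey]; exact h2.2.2.2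
  -- the local minimum along the curve
  have hminloc : IsLocalMin (fun τ => f ((γ τ).1)) 0 := by
    have htends : Tendsto γ (𝓝 0)
        (𝓝[{q : (Fin n → ℝ) × (Fin s → ℝ) | q.1 ∈ Dt ∧ q.2 ∈ Dz ∧ cE (q.1, vabs q.2) = 0 ∧
          (∀ j, 0 ≤ cI (q.1, vabs q.2) j) ∧ cZ (q.1, vabs q.2) = q.2}] (tstar, zstar)) :=
      tendsto_nhdsWithin_iff.2 ⟨htend, hfeas_ev⟩
    have hminev : ∀ᶠ q in (𝓝[{q : (Fin n → ℝ) × (Fin s → ℝ) | q.1 ∈ Dt ∧ q.2 ∈ Dz ∧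
        cE (q.1, vabs q.2) = 0 ∧ (∀ j, 0 ≤ cI (q.1, vabs q.2) j) ∧ cZ (q.1, vabs q.2) = q.2}]
        (tstar, zstar)), f tstar ≤ f q.1 := hmin
    have := htends.eventually hminev
    show ∀ᶠ τ in 𝓝 (0:ℝ), (fun τ => f ((γ τ).1)) 0 ≤ f ((γ τ).1)
    filter_upwards [this] with τ hτ
    simpa [hγ0] using hτ
  -- Lagrangian smoothness
  set Lg := Lagr f cE cI cZ lE lI lZ with hLg
  have hLeq : Lg = fun p : (Fin n → ℝ) × (Fin s → ℝ) =>
      f p.1 + lE ⬝ᵥ cE p - lI ⬝ᵥ cI p + lZ ⬝ᵥ cZ p := rfl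
  have hLco : ContDiffAt ℝ 2 Lg pstar := by
    have hp1 : ContDiffAt ℝ 2 (fun p : (Fin n → ℝ) × (Fin s → ℝ) => f p.1) pstar :=
      hfAt.comp pstar contDiff_fst.contDiffAt
    have hp2 : ContDiffAt ℝ 2 (fun p : (Fin n → ℝ) × (Fin s → ℝ) => dotCLM lE (cE p)) pstar :=
      ((dotCLM lE).contDiff.contDiffAt).comp pstar hcEAt
    have hp3 : ContDiffAt ℝ 2 (fun p : (Fin n → ℝ) × (Fin s → ℝ) => dotCLM lI (cI p)) pstar :=
      ((dotCLM lI).contDiff.contDiffAt).comp pstar hcIAt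
    have hp4 : ContDiffAt ℝ 2 (fun p : (Fin n → ℝ) × (Fin s → ℝ) => dotCLM lZ (cZ p)) pstar :=
      ((dotCLM lZ).contDiff.contDiffAt).comp pstar hcZAt
    have h1 := ((hp1.add hp2).sub hp3).add hp4
    have h2 : (fun p : (Fin n → ℝ) × (Fin s → ℝ) =>
        f p.1 + dotCLM lE (cE p) - dotCLM lI (cI p) + dotCLM lZ (cZ p)) = Lg := by
      funext p
      rw [dotCLM_apply, dotCLM_apply, dotCLM_apply]
      rfl
    rwa [h2] at h1
  -- first derivative of the Lagrangian
  set fstX := ContinuousLinearMap.fst ℝ (Fin n → ℝ) (Fin s → ℝ) with hfstX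
  set Dft := fderiv ℝ f tstar with hDft
  set gradL := ((Dft.comp fstX + (dotCLM lE).comp DcE) - (dotCLM lI).comp DcI) +
    (dotCLM lZ).comp DcZ with hgradLdef
  have hLfd : HasFDerivAt Lg gradL pstar := by
    have hp1 : HasFDerivAt (fun p : (Fin n → ℝ) × (Fin s → ℝ) => f p.1) (Dft.comp fstX) pstar :=
      hfd.hasFDerivAt.comp pstar fstX.hasFDerivAt
    have hp2 : HasFDerivAt (fun p : (Fin n → ℝ) × (Fin s → ℝ) => dotCLM lE (cE p))
        ((dotCLM lE).comp DcE) pstar :=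
      (dotCLM lE).hasFDerivAt.comp pstar hcEd.hasFDerivAt
    have hp3 : HasFDerivAt (fun p : (Fin n → ℝ) × (Fin s → ℝ) => dotCLM lI (cI p))
        ((dotCLM lI).comp DcI) pstar :=
      (dotCLM lI).hasFDerivAt.comp pstar hcId.hasFDerivAt
    have hp4 : HasFDerivAt (fun p : (Fin n → ℝ) × (Fin s → ℝ) => dotCLM lZ (cZ p))
        ((dotCLM lZ).comp DcZ) pstar :=
      (dotCLM lZ).hasFDerivAt.comp pstar hcZd.hasFDerivAt
    have h1 := ((hp1.add hp2).sub hp3).add hp4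
    have h2 : (fun p : (Fin n → ℝ) × (Fin s → ℝ) =>
        f p.1 + dotCLM lE (cE p) - dotCLM lI (cI p) + dotCLM lZ (cZ p)) = Lg := by
      funext p
      rw [dotCLM_apply, dotCLM_apply, dotCLM_apply]
      rfl
    rw [← h2]; exact h1
  have hfderivLg : fderiv ℝ Lg pstar = gradL := hLfd.fderiv
  -- differentiability of γ near 0, second derivative of γ
  obtain ⟨Uγ, hUγmem, hγOn⟩ := hγcd.contDiffOn (le_refl 2) (by norm_num)
  have hUγint : (0:ℝ) ∈ interior Uγ := mem_interior_iff_mem_nhds.2 hUγmem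
  have hγdiff_ev : ∀ᶠ τ in 𝓝 (0:ℝ), DifferentiableAt ℝ γ τ := by
    filter_upwards [isOpen_interior.mem_nhds hUγint] with τ hτ
    exact ((hγOn.mono interior_subset).differentiableOn hone).differentiableAt
      (isOpen_interior.mem_nhds hτ)
  set γ' := deriv γ with hγ'def
  have hγ'0 : γ' 0 = v0 := hγd.deriv
  have hγ'diff : DifferentiableAt ℝ γ' 0 := diffAt_deriv hγcd
  set γ'' := deriv γ' 0 with hγ''def
  have hγ''d : HasDerivAt γ' γ'' 0 := hγ'diff.hasDerivAt
  -- vanishing of second derivative components on α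
  have hz''α : ∀ i : Fin s, zstar i = 0 → γ''.2 i = 0 := by
    intro i hzi
    have ev0 : ∀ᶠ τ in 𝓝 (0:ℝ), (γ τ).2 i = 0 := by
      filter_upwards [hγG'] with τ hτ
      exact hτ.2.2.1 ⟨i, hzi⟩
    have ev1 : ∀ᶠ τ in 𝓝 (0:ℝ), (γ' τ).2 i = 0 := by
      have evloc : ∀ᶠ τ in 𝓝 (0:ℝ), ∀ᶠ τ' in 𝓝 τ, (γ τ').2 i = 0 := ev0.eventually_nhds
      filter_upwards [hγdiff_ev, evloc] with τ h1 h2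
      have hder : HasDerivAt (fun τ => (γ τ).2 i) ((γ' τ).2 i) τ :=
        ((ContinuousLinearMap.proj i).comp
          (ContinuousLinearMap.snd ℝ (Fin n → ℝ) (Fin s → ℝ))).hasFDerivAt.comp_hasDerivAt τ
          h1.hasDerivAt
      have heq : (fun τ => (γ τ).2 i) =ᶠ[𝓝 τ] fun _ => (0:ℝ) := h2
      rw [← hder.deriv, heq.deriv_eq, deriv_const]
    have hproj : HasDerivAt (fun τ => (γ' τ).2 i) (γ''.2 i) 0 :=
      ((ContinuousLinearMap.proj i).comp
        (ContinuousLinearMap.snd ℝ (Fin n → ℝ) (Fin s → ℝ))).hasFDerivAt.comp_hasDerivAt 0 hγ''d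
    have heq2 : (fun τ => (γ' τ).2 i) =ᶠ[𝓝 (0:ℝ)] fun _ => (0:ℝ) := ev1
    rw [← hproj.deriv, heq2.deriv_eq, deriv_const]
  -- derivative bookkeeping for the composed curve
  obtain ⟨UL, hULmem, hLOn⟩ := hLco.contDiffOn (le_refl 2) (by norm_num)
  have hULint : pstar ∈ interior UL := mem_interior_iff_mem_nhds.2 hULmem
  have hLdiff : ∀ x ∈ interior UL, DifferentiableAt ℝ Lg x := fun x hx =>
    ((hLOn.mono interior_subset).differentiableOn hone).differentiableAt
      (isOpen_interior.mem_nhds hx)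
  set cfn : ℝ → (Fin n → ℝ) × (Fin s → ℝ) := fun τ => Sc (γ τ) with hcfndef
  have hcfn0 : cfn 0 = pstar := by
    show Sc (γ 0) = pstar
    rw [hγ0, hScphat]
  have htc : Tendsto cfn (𝓝 0) (𝓝 pstar) := by
    have h1 := (Sc.continuous.tendsto (tstar, zstar)).comp htend
    rwa [hScphat] at h1
  set ufn : ℝ → (Fin n → ℝ) × (Fin s → ℝ) := fun τ => Sc (γ' τ) with hufndef
  have hu0 : ufn 0 = Sc v0 := by
    show Sc (γ' 0) = Sc v0
    rw [hγ'0]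
  have hφd_ev : ∀ᶠ τ in 𝓝 (0:ℝ), HasDerivAt (fun τ => Lg (cfn τ))
      (fderiv ℝ Lg (cfn τ) (ufn τ)) τ := by
    filter_upwards [hγdiff_ev, htc.eventually (isOpen_interior.eventually_mem hULint)]
      with τ h1 h2
    have hcder : HasDerivAt cfn (ufn τ) τ := Sc.hasFDerivAt.comp_hasDerivAt τ h1.hasDerivAt
    exact (hLdiff _ h2).hasFDerivAt.comp_hasDerivAt τ hcder
  set D2 := fderiv ℝ (fderiv ℝ Lg) pstar with hD2def
  have hD2d : HasFDerivAt (fderiv ℝ Lg) D2 pstar :=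
    ((hLco.fderiv_right (m := 1) (by norm_num)).differentiableAt (by norm_num)).hasFDerivAt
  have hc0d : HasDerivAt cfn (Sc v0) 0 := Sc.hasFDerivAt.comp_hasDerivAt 0 hγd
  have hAd : HasDerivAt (fun τ => fderiv ℝ Lg (cfn τ)) (D2 (Sc v0)) 0 := by
    have h1 : HasFDerivAt (fderiv ℝ Lg) D2 (cfn 0) := by rw [hcfn0]; exact hD2d
    exact h1.comp_hasDerivAt 0 hc0d
  have hud : HasDerivAt ufn (Sc γ'') 0 := Sc.hasFDerivAt.comp_hasDerivAt 0 hγ''d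
  have hφ'd : HasDerivAt (fun τ => fderiv ℝ Lg (cfn τ) (ufn τ))
      (D2 (Sc v0) (Sc v0) + fderiv ℝ Lg pstar (Sc γ'')) 0 := by
    have h1 := hAd.clm_apply hud
    rw [hu0, hcfn0] at h1
    exact h1
  have hφ2 : HasDerivAt (deriv (fun τ => Lg (cfn τ)))
      (D2 (Sc v0) (Sc v0) + fderiv ℝ Lg pstar (Sc γ'')) 0 := by
    apply hφ'd.congr_of_eventuallyEq
    filter_upwards [hφd_ev] with τ hτ
    exact hτ.deriv
  -- splitting the composed Lagrangian along the curve
  set ℓψ := (dotCLM lZ).comp (ContinuousLinearMap.snd ℝ (Fin n → ℝ) (Fin s → ℝ)) with hℓψdef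
  have hℓψ_apply : ∀ x : (Fin n → ℝ) × (Fin s → ℝ), ℓψ x = lZ ⬝ᵥ x.2 := by
    intro x
    show dotCLM lZ x.2 = lZ ⬝ᵥ x.2
    exact dotCLM_apply _ _
  have hφsplit : (fun τ => Lg (cfn τ)) =ᶠ[𝓝 (0:ℝ)]
      fun τ => f ((γ τ).1) + ℓψ (γ τ) := by
    filter_upwards [hγG'] with τ h2
    show Lg (Sc (γ τ)) = f ((γ τ).1) + ℓψ (γ τ)
    have e1 : Lg (Sc (γ τ)) = f ((Sc (γ τ)).1) + lE ⬝ᵥ cE (Sc (γ τ)) -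
        lI ⬝ᵥ cI (Sc (γ τ)) + lZ ⬝ᵥ cZ (Sc (γ τ)) := rfl
    have e3 : lI ⬝ᵥ cI (Sc (γ τ)) = 0 := by
      show ∑ j, lI j * cI (Sc (γ τ)) j = 0
      apply Finset.sum_eq_zero
      intro j _
      by_cases hj : Apred j
      · rw [h2.2.1 ⟨j, hj⟩, mul_zero]
      · rw [hlI0 j hj, zero_mul]
    rw [e1, h2.1, h2.2.2.2, e3, hℓψ_apply]
    show f ((γ τ).1) + lE ⬝ᵥ 0 - 0 + lZ ⬝ᵥ (γ τ).2 = _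
    rw [dotProduct_zero]
    ring
  -- first derivatives of the two pieces
  obtain ⟨Uf, hUfmem, hfOn⟩ := hfAt.contDiffOn (le_refl 2) (by norm_num)
  have hUfint : tstar ∈ interior Uf := mem_interior_iff_mem_nhds.2 hUfmem
  have ht1 : Tendsto (fun τ => (γ τ).1) (𝓝 0) (𝓝 tstar) :=
    (continuous_fst.tendsto _).comp htend
  set hfn' : ℝ → ℝ := fun τ => fderiv ℝ f ((γ τ).1) ((γ' τ).1) with hhfn'def
  have hh_ev : ∀ᶠ τ in 𝓝 (0:ℝ), HasDerivAt (fun τ => f ((γ τ).1)) (hfn' τ) τ := by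
    filter_upwards [hγdiff_ev, ht1.eventually (isOpen_interior.eventually_mem hUfint)]
      with τ h1 h2
    have hfd2 : DifferentiableAt ℝ f ((γ τ).1) :=
      ((hfOn.mono interior_subset).differentiableOn hone).differentiableAt
        (isOpen_interior.mem_nhds h2)
    have htd : HasDerivAt (fun τ => (γ τ).1) ((γ' τ).1) τ :=
      (ContinuousLinearMap.fst ℝ (Fin n → ℝ) (Fin s → ℝ)).hasFDerivAt.comp_hasDerivAt τ
        h1.hasDerivAt
    exact hfd2.hasFDerivAt.comp_hasDerivAt τ htd
  have hψ_ev : ∀ᶠ τ in 𝓝 (0:ℝ), HasDerivAt (fun τ => ℓψ (γ τ)) (ℓψ (γ' τ)) τ := by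
    filter_upwards [hγdiff_ev] with τ h1
    exact ℓψ.hasFDerivAt.comp_hasDerivAt τ h1.hasDerivAt
  have hψ'd : HasDerivAt (fun τ => ℓψ (γ' τ)) (ℓψ γ'') 0 :=
    ℓψ.hasFDerivAt.comp_hasDerivAt 0 hγ''d
  -- equality of second derivatives
  have hderivφ_eq : deriv (fun τ => Lg (cfn τ)) =ᶠ[𝓝 (0:ℝ)]
      fun τ => hfn' τ + ℓψ (γ' τ) := by
    refine (hφsplit.deriv).trans ?_
    filter_upwards [hh_ev, hψ_ev] with τ h1 h2
    exact (h1.add h2).deriv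
  have hsum2 : HasDerivAt (fun τ => hfn' τ + ℓψ (γ' τ))
      (D2 (Sc v0) (Sc v0) + fderiv ℝ Lg pstar (Sc γ'')) 0 :=
    hφ2.congr_of_eventuallyEq hderivφ_eq.symm
  have hh2d : HasDerivAt hfn'
      (D2 (Sc v0) (Sc v0) + fderiv ℝ Lg pstar (Sc γ'') - ℓψ γ'') 0 := by
    have h1 := hsum2.sub hψ'd
    have h2 : (fun τ => hfn' τ + ℓψ (γ' τ) - ℓψ (γ' τ)) = hfn' := by
      funext τ; ring
    rw [← h2]; exact h1
  have hfinal0 : 0 ≤ D2 (Sc v0) (Sc v0) + fderiv ℝ Lg pstar (Sc γ'') - ℓψ γ'' :=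
    second_deriv_test hminloc hh_ev hh2d
  -- the gradient term equals the ψ term
  have hwpart : ∀ w : Fin n → ℝ,
      Dft w + lE ⬝ᵥ (j1E *ᵥ w) - lI ⬝ᵥ (j1I *ᵥ w) + lZ ⬝ᵥ (j1Z *ᵥ w) = 0 := by
    intro w
    have h0 : Dft w + lE ⬝ᵥ (j1E *ᵥ w) - lI ⬝ᵥ (j1I *ᵥ w) + lZ ⬝ᵥ (j1Z *ᵥ w) =
        ((fun j => Dft (Pi.single j 1)) + j1Eᵀ *ᵥ lE - j1Iᵀ *ᵥ lI + j1Zᵀ *ᵥ lZ) ⬝ᵥ w := by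
      rw [add_dotProduct, sub_dotProduct, add_dotProduct]
      rw [dot_mulVec_eq lE j1E w, dot_mulVec_eq lI j1I w, dot_mulVec_eq lZ j1Z w]
      congr 1
      congr 1
      congr 1
      rw [clm_pi_apply Dft w]
      show _ = ∑ j, Dft (Pi.single j 1) * w j
      apply Finset.sum_congr rfl
      intro j _
      rw [smul_eq_mul, mul_comm]
    rw [h0, hstat, zero_dotProduct]
  have hupart : ∀ u' : Fin s → ℝ,
      lE ⬝ᵥ (j2E *ᵥ u') - lI ⬝ᵥ (j2I *ᵥ u') + lZ ⬝ᵥ (j2Z *ᵥ u') =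
      (j2Eᵀ *ᵥ lE - j2Iᵀ *ᵥ lI + j2Zᵀ *ᵥ lZ) ⬝ᵥ u' := by
    intro u'
    rw [add_dotProduct, sub_dotProduct]
    rw [dot_mulVec_eq lE j2E u', dot_mulVec_eq lI j2I u', dot_mulVec_eq lZ j2Z u']
  have hgradSc : fderiv ℝ Lg pstar (Sc γ'') = ℓψ γ'' := by
    rw [hfderivLg, hℓψ_apply]
    have hSg : Sc γ'' = (γ''.1, Dσ *ᵥ γ''.2) := hSc_apply _
    have hDcE2 : DcE (Sc γ'') = j1E *ᵥ γ''.1 + j2E *ᵥ (Dσ *ᵥ γ''.2) := by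
      rw [hSg, hDcE, fderiv_eq_jac, ← hj1E, ← hj2E]
    have hDcI2 : DcI (Sc γ'') = j1I *ᵥ γ''.1 + j2I *ᵥ (Dσ *ᵥ γ''.2) := by
      rw [hSg, hDcI, fderiv_eq_jac, ← hj1I, ← hj2I]
    have hDcZ2 : DcZ (Sc γ'') = j1Z *ᵥ γ''.1 + j2Z *ᵥ (Dσ *ᵥ γ''.2) := by
      rw [hSg, hDcZ, fderiv_eq_jac, ← hj1Z, ← hj2Z]
    calc gradL (Sc γ'')
        = Dft γ''.1 + dotCLM lE (DcE (Sc γ'')) - dotCLM lI (DcI (Sc γ'')) +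
          dotCLM lZ (DcZ (Sc γ'')) := rfl
      _ = Dft γ''.1 + lE ⬝ᵥ (j1E *ᵥ γ''.1 + j2E *ᵥ (Dσ *ᵥ γ''.2)) -
          lI ⬝ᵥ (j1I *ᵥ γ''.1 + j2I *ᵥ (Dσ *ᵥ γ''.2)) +
          lZ ⬝ᵥ (j1Z *ᵥ γ''.1 + j2Z *ᵥ (Dσ *ᵥ γ''.2)) := by
            rw [hDcE2, hDcI2, hDcZ2, dotCLM_apply, dotCLM_apply, dotCLM_apply]
      _ = (Dft γ''.1 + lE ⬝ᵥ (j1E *ᵥ γ''.1) - lI ⬝ᵥ (j1I *ᵥ γ''.1) + lZ ⬝ᵥ (j1Z *ᵥ γ''.1)) +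
          (lE ⬝ᵥ (j2E *ᵥ (Dσ *ᵥ γ''.2)) - lI ⬝ᵥ (j2I *ᵥ (Dσ *ᵥ γ''.2)) +
            lZ ⬝ᵥ (j2Z *ᵥ (Dσ *ᵥ γ''.2))) := by
            rw [dotProduct_add, dotProduct_add, dotProduct_add]
            ring
      _ = 0 + ((j2Eᵀ *ᵥ lE - j2Iᵀ *ᵥ lI + j2Zᵀ *ᵥ lZ) ⬝ᵥ (Dσ *ᵥ γ''.2)) := by
            rw [hwpart, hupart]
      _ = lZ ⬝ᵥ γ''.2 := by
            rw [zero_add]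
            show ∑ i, (j2Eᵀ *ᵥ lE - j2Iᵀ *ᵥ lI + j2Zᵀ *ᵥ lZ) i * (Dσ *ᵥ γ''.2) i =
              ∑ i, lZ i * γ''.2 i
            apply Finset.sum_congr rfl
            intro i _
            rw [hDσ_apply]
            by_cases hzi : zstar i = 0
            · rw [hz''α i hzi, show σ i = Real.sign (zstar i) from rfl, hzi, Real.sign_zero]
              ring
            · rw [hsig i hzi, show σ i = Real.sign (zstar i) from rfl]
              have h9 := real_sign_sq (zstar i) hzi
              linear_combination (lZ i * γ''.2 i) * h9
  have hfinalQ : 0 ≤ D2 (Sc v0) (Sc v0) := by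
    rw [hgradSc] at hfinal0
    linarith
  -- identify the direction vector
  have hmatid : (sel αc)ᵀ * (sel αc * (Dσ * Wm)) = Dσ * Wm := by
    have hsel2 : ∀ (a : {x // αc x}) (j : Fin n),
        (sel αc * (Dσ * Wm)) a j = (Dσ * Wm) (a : Fin s) j := by
      intro a j
      simp only [Matrix.mul_apply, sel, Matrix.of_apply]
      rw [Finset.sum_eq_single ((a : Fin s))]
      · simp
      · intro b _ hb; simp [Ne.symm hb]
      · intro hb; exact absurd (Finset.mem_univ _) hb
    apply Matrix.ext
    intro i j
    have hexp : ((sel αc)ᵀ * (sel αc * (Dσ * Wm))) i j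
        = ∑ a : {x // αc x}, (if (a : Fin s) = i then (1:ℝ) else 0) *
          (sel αc * (Dσ * Wm)) a j := by
      simp only [Matrix.mul_apply, Matrix.transpose_apply, sel, Matrix.of_apply]
    rw [hexp]
    by_cases hi : αc i
    · rw [Finset.sum_eq_single (⟨i, hi⟩ : {x // αc x})]
      · rw [hsel2]; simp
      · intro b _ hb
        have hbne : (b : Fin s) ≠ i := fun hc => hb (Subtype.ext hc)
        simp [hbne]
      · intro hb; exact absurd (Finset.mem_univ _) hb
    · have hzi : zstar i = 0 := not_not.1 hi
      have hrhs : (Dσ * Wm) i j = 0 := by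
        rw [Matrix.diagonal_mul, show σ i = Real.sign (zstar i) from rfl, hzi, Real.sign_zero,
          zero_mul]
      rw [hrhs]
      apply Finset.sum_eq_zero
      intro b _
      have hbne : (b : Fin s) ≠ i := fun hc => hi (hc ▸ b.2)
      simp [hbne]
  have hvec : ((sel αc)ᵀ * (sel αc * (Dσ * Wm))) *ᵥ d = Dσ *ᵥ (Wm *ᵥ d) := by
    rw [hmatid, ← Matrix.mulVec_mulVec]
  have hScv0 : Sc v0 = (d, Dσ *ᵥ (Wm *ᵥ d)) := hSc_apply _
  rw [hvec, ← hScv0]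
  exact hfinalQ




end
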